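/- Fix σ > 1/2, a positive integer l, a constant c̄ > 0, and let g : ℝ → ℝ satisfy g(T) > T for all large T. Assume: (i) ∫_T^{g(T)} |ζ(1/2+it)|² dt / ∫_T^{g(T)} |ζ(σ+it)|² dt = (1/ζ(2σ))·ln T + O(1) as T → ∞; (ii) ∫_T^{g(T)} |ζ(1/2+it)|² dt / ∫_T^{g(T)} |S₁(t)|^{2l} dt = (1/c̄)·ln T + O(1) as T → ∞; (iii) (t_ν) is a Gram sequence satisfying both the Titchmarsh-sum asymptotic and the second Moser asymptotic. Fix x > 0 and set K₁ = 4π⁵·x/(3·ζ(2σ)⁵), K₂ = 4π⁵·x/(3·c̄⁵), K₃ = 4π³·x/ζ(2σ)⁵. Define A(τ) = (∫_{K₁τ}^{g(K₁τ)} |ζ(σ+it)|² dt)⁵·(∫_{K₁τ}^{g(K₁τ)} |ζ(1/2+it)|² dt)^{−5}·Σ_{ν : K₁τ ≤ t_ν ≤ 2K₁τ} |ζ(1/2+i t_ν)|²|ζ(1/2+i t_{ν+1})|², B(τ) = (∫_{K₂τ}^{g(K₂τ)} |S₁(t)|^{2l} dt)⁵·(∫_{K₂τ}^{g(K₂τ)}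 |ζ(1/2+it)|² dt)^{−5}·Σ_{ν : K₂τ ≤ t_ν ≤ 2K₂τ} |ζ(1/2+i t_ν)|²|ζ(1/2+i t_{ν+1})|², and C(τ) = (∫_{K₃τ}^{g(K₃τ)} |ζ(σ+it)|² dt)⁵·(∫_{K₃τ}^{g(K₃τ)} |ζ(1/2+it)|² dt)^{−5}·Σ_{ν : K₃τ ≤ t_ν ≤ 2K₃τ} |ζ(1/2+i t_ν)|⁴. Then A(τ) ~ B(τ) ~ C(τ) ~ x·τ as τ → ∞. -/

import Mathlib

open Filter Topology MeasureTheory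
open scoped ComplexOrder

/-- |ζ(σ+it)|² -/
noncomputable def zsq (σ : ℝ) (t : ℝ) : ℝ :=
  ‖riemannZeta (↑σ + ↑t * Complex.I)‖ ^ 2

/-- S₁(t) = (1/π)·∫₀^t arg ζ(1/2 + iu) du -/
noncomputable def S1 (t : ℝ) : ℝ :=
  (1 / Real.pi) * ∫ u in (0:ℝ)..t, Complex.arg (riemannZeta (1/2 + ↑u * Complex.I))

/-- Riemann–Siegel theta function θ(t) = Im log Γ(1/4 + it/2) − (t/2)·ln π. -/
noncomputable def RStheta (t : ℝ) : ℝ :=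
  (Complex.log (Complex.Gamma (1/4 + (↑t/2) * Complex.I))).im - (t/2) * Real.log Real.pi

/-- A Gram sequence: strictly increasing positive reals tending to ∞ with θ(t_ν) = π·ν. -/
def IsGramSeq (tν : ℕ → ℝ) : Prop :=
  StrictMono tν ∧ (∀ ν : ℕ, 1 ≤ ν → 0 < tν ν) ∧ Filter.Tendsto tν Filter.atTop Filter.atTop ∧
    ∀ ν : ℕ, 1 ≤ ν → RStheta (tν ν) = Real.pi * ν

/-- Titchmarsh sum Σ_{T ≤ t_ν ≤ 2T} |ζ(1/2+it_ν)|²·|ζ(1/2+it_{ν+1})|². -/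
noncomputable def TitchSum (tν : ℕ → ℝ) (T : ℝ) : ℝ :=
  ∑' ν : ℕ, if T ≤ tν ν ∧ tν ν ≤ 2 * T then zsq (1/2) (tν ν) * zsq (1/2) (tν (ν+1)) else 0

/-- The Titchmarsh-sum asymptotic (Moser 1991):
Σ_{T ≤ t_ν ≤ 2T} |ζ(1/2+it_ν)|²|ζ(1/2+it_{ν+1})|² = (3/(4π⁵))·T·ln⁵T·(1+O(1/ln T)). -/
def TitchAsymp (tν : ℕ → ℝ) : Prop :=
  ∃ C : ℝ, ∀ᶠ T in Filter.atTop,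
    |TitchSum tν T / (3 / (4 * Real.pi ^ 5) * T * Real.log T ^ 5) - 1| ≤ C / Real.log T

/-- The sum Σ_{T ≤ t_ν ≤ 2T} |ζ(1/2+it_ν)|⁴. -/
noncomputable def MoserSum (tν : ℕ → ℝ) (T : ℝ) : ℝ :=
  ∑' ν : ℕ, if T ≤ tν ν ∧ tν ν ≤ 2 * T
    then ‖riemannZeta (1/2 + ↑(tν ν) * Complex.I)‖ ^ 4 else 0

/-- The second Moser asymptotic (1991):
Σ_{T ≤ t_ν ≤ 2T} |ζ(1/2+it_ν)|⁴ = (1/(4π³))·T·ln⁵T·(1+O(1/ln T)). -/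
def MoserAsymp (tν : ℕ → ℝ) : Prop :=
  ∃ C : ℝ, ∀ᶠ T in Filter.atTop,
    |MoserSum tν T / (1 / (4 * Real.pi ^ 3) * T * Real.log T ^ 5) - 1| ≤ C / Real.log T

/-- A(τ): first member of the chain, with K₁ = 4π⁵x/(3ζ(2σ)⁵). -/
noncomputable def chainA (σ : ℝ) (g : ℝ → ℝ) (tν : ℕ → ℝ) (x τ : ℝ) : ℝ :=
  ((∫ t in (4 * Real.pi ^ 5 * x / (3 * (riemannZeta (2 * (σ:ℂ))).re ^ 5) * τ)..(g (4 * Real.pi ^ 5 * x / (3 * (riemannZeta (2 * (σ:ℂ))).re ^ 5) * τ)), zsq σ t) ^ 5) *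
  (((∫ t in (4 * Real.pi ^ 5 * x / (3 * (riemannZeta (2 * (σ:ℂ))).re ^ 5) * τ)..(g (4 * Real.pi ^ 5 * x / (3 * (riemannZeta (2 * (σ:ℂ))).re ^ 5) * τ)), zsq (1/2) t) ^ 5)⁻¹) *
  TitchSum tν (4 * Real.pi ^ 5 * x / (3 * (riemannZeta (2 * (σ:ℂ))).re ^ 5) * τ)

/-- B(τ): second member of the chain, with K₂ = 4π⁵x/(3c̄⁵). -/
noncomputable def chainB (l : ℕ) (cbar : ℝ) (g : ℝ → ℝ) (tν : ℕ → ℝ) (x τ : ℝ) : ℝ :=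
  ((∫ t in (4 * Real.pi ^ 5 * x / (3 * cbar ^ 5) * τ)..(g (4 * Real.pi ^ 5 * x / (3 * cbar ^ 5) * τ)), |S1 t| ^ (2 * l)) ^ 5) *
  (((∫ t in (4 * Real.pi ^ 5 * x / (3 * cbar ^ 5) * τ)..(g (4 * Real.pi ^ 5 * x / (3 * cbar ^ 5) * τ)), zsq (1/2) t) ^ 5)⁻¹) *
  TitchSum tν (4 * Real.pi ^ 5 * x / (3 * cbar ^ 5) * τ)

/-- C(τ): third member of the chain, with K₃ = 4π³x/ζ(2σ)⁵. -/
noncomputable def chainC (σ : ℝ) (g : ℝ → ℝ) (tν : ℕ → ℝ) (x τ : ℝ) : ℝ :=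
  ((∫ t in (4 * Real.pi ^ 3 * x / (riemannZeta (2 * (σ:ℂ))).re ^ 5 * τ)..(g (4 * Real.pi ^ 3 * x / (riemannZeta (2 * (σ:ℂ))).re ^ 5 * τ)), zsq σ t) ^ 5) *
  (((∫ t in (4 * Real.pi ^ 3 * x / (riemannZeta (2 * (σ:ℂ))).re ^ 5 * τ)..(g (4 * Real.pi ^ 3 * x / (riemannZeta (2 * (σ:ℂ))).re ^ 5 * τ)), zsq (1/2) t) ^ 5)⁻¹) *
  MoserSum tν (4 * Real.pi ^ 3 * x / (riemannZeta (2 * (σ:ℂ))).re ^ 5 * τ)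


lemma aux_zeta_re_pos {σ : ℝ} (hσ : 1/2 < σ) : 0 < (riemannZeta (2 * (σ:ℂ))).re := by
  have h2σ : (1:ℝ) < 2 * σ := by linarith
  have hre : (1:ℝ) < (2 * (σ:ℂ)).re := by simpa using h2σ
  have hz : riemannZeta (2 * (σ:ℂ)) = LSeries 1 (2 * (σ:ℂ)) :=
    (LSeries_one_eq_riemannZeta hre).symm
  have habs : LSeries.abscissaOfAbsConv 1 < ((2 * (σ:ℂ)).re : EReal) := by
    rw [LSeries.abscissaOfAbsConv_one]; exact_mod_cast hre
  have h2 : 2 * (σ:ℂ) = (((2 * (σ:ℂ)).re : ℝ) : ℂ) := by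
    simp [Complex.ext_iff]
  have hpos : 0 < LSeries 1 (((2 * (σ:ℂ)).re : ℝ) : ℂ) := by
    refine LSeries.positive (fun n => ?_) ?_ ?_
    · exact zero_le_one
    · exact zero_lt_one
    · exact_mod_cast habs
  rw [hz, h2]
  have := (Complex.lt_def.mp hpos).1
  simpa using this

lemma aux_ratio_tendsto (u : ℝ → ℝ) (z : ℝ) (hz : 0 < z)
    (h : ∃ C : ℝ, ∀ᶠ T in atTop, |u T - 1 / z * Real.log T| ≤ C) :
    Tendsto (fun T => u T / (1 / z * Real.log T)) atTop (𝓝 1) := by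
  obtain ⟨C, hC⟩ := h
  have hL : Tendsto (fun T => 1 / z * Real.log T) atTop atTop :=
    (tendsto_const_mul_atTop_of_pos (by positivity)).mpr Real.tendsto_log_atTop
  have h0 : Tendsto (fun T => u T / (1 / z * Real.log T) - 1) atTop (𝓝 0) := by
    apply squeeze_zero_norm' (a := fun T => C / (1 / z * Real.log T))
    · filter_upwards [hC, hL.eventually_gt_atTop 0] with T h1 h2
      rw [Real.norm_eq_abs]
      rw [div_sub_one (ne_of_gt h2), abs_div, abs_of_pos h2]
      gcongr
    · exact tendsto_const_nhds.div_atTop hL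
  have := h0.add_const 1
  simpa using this

lemma aux_asymp_tendsto (S : ℝ → ℝ) (c : ℝ)
    (h : ∃ C : ℝ, ∀ᶠ T in atTop, |S T / (c * T * Real.log T ^ 5) - 1| ≤ C / Real.log T) :
    Tendsto (fun T => S T / (c * T * Real.log T ^ 5)) atTop (𝓝 1) := by
  obtain ⟨C, hC⟩ := h
  have h0 : Tendsto (fun T => S T / (c * T * Real.log T ^ 5) - 1) atTop (𝓝 0) := by
    apply squeeze_zero_norm' (a := fun T => C / Real.log T)
    · filter_upwards [hC] with T h1
      simpa using h1
    · exact tendsto_const_nhds.div_atTop Real.tendsto_log_atTop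
  have := h0.add_const 1
  simpa using this

lemma aux_chain_limit (a b S : ℝ → ℝ) (z c K x : ℝ) (hK : 0 < K) (hx : x ≠ 0)
    (hz : z ≠ 0) (hc : c ≠ 0) (hzcK : z ^ 5 * c * K = x)
    (h1 : Tendsto (fun T => (a T / b T) / (1 / z * Real.log T)) atTop (𝓝 1))
    (h2 : Tendsto (fun T => S T / (c * T * Real.log T ^ 5)) atTop (𝓝 1)) :
    Tendsto (fun τ => (b (K * τ)) ^ 5 * ((a (K * τ)) ^ 5)⁻¹ * S (K * τ) / (x * τ))
      atTop (𝓝 1) := by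
  have hcomp : Tendsto (fun τ : ℝ => K * τ) atTop atTop :=
    (tendsto_const_mul_atTop_of_pos hK).mpr tendsto_id
  have h1' : Tendsto (fun τ => (a (K * τ) / b (K * τ)) / (1 / z * Real.log (K * τ)))
      atTop (𝓝 1) := h1.comp hcomp
  have h2' : Tendsto (fun τ => S (K * τ) / (c * (K * τ) * Real.log (K * τ) ^ 5))
      atTop (𝓝 1) := h2.comp hcomp
  have hlim : Tendsto (fun τ =>
      (((a (K * τ) / b (K * τ)) / (1 / z * Real.log (K * τ)))⁻¹) ^ 5 *
      (S (K * τ) / (c * (K * τ) * Real.log (K * τ) ^ 5))) atTop (𝓝 1) := by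
    have := ((h1'.inv₀ one_ne_zero).pow 5).mul h2'
    simpa using this
  refine hlim.congr' ?_
  filter_upwards [eventually_gt_atTop 0, hcomp.eventually (eventually_gt_atTop 1),
    h1'.eventually_ne one_ne_zero] with τ hτ hT1 hr1
  set T := K * τ with hT
  set L := 1 / z * Real.log T with hLdef
  set r1 := (a T / b T) / L with hr1def
  set r2 := S T / (c * T * Real.log T ^ 5) with hr2def
  have hlog : Real.log T ≠ 0 := ne_of_gt (Real.log_pos hT1)
  have hL : L ≠ 0 := by
    rw [hLdef]; positivity
  have hτ' : τ ≠ 0 := ne_of_gt hτ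
  have hT0 : T ≠ 0 := by rw [hT]; positivity
  have hab : a T / b T ≠ 0 := by
    intro hcon
    apply hr1
    rw [hr1def, hcon, zero_div]
  have hb : b T ≠ 0 := by
    intro hcon; apply hab; rw [hcon, div_zero]
  have ha : a T ≠ 0 := by
    intro hcon; apply hab; rw [hcon, zero_div]
  have hba : a T / b T = r1 * L := by
    rw [hr1def, div_mul_cancel₀ _ hL]
  have hS : S T = r2 * (c * T * Real.log T ^ 5) := by
    rw [hr2def, div_mul_cancel₀]
    positivity
  have hr1ne : r1 ≠ 0 := hr1
  -- now algebra
  have key : b T ^ 5 * (a T ^ 5)⁻¹ * S T / (x * τ) = (r1⁻¹) ^ 5 * r2 := by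
    have hbT : a T = r1 * L * b T := by
      rw [← hba]; exact (div_mul_cancel₀ _ hb).symm
    rw [hS, hbT, ← hzcK, hLdef, hT]
    field_simp
    have hb' : b (K * τ) ≠ 0 := hb
    have hlog' : Real.log (K * τ) ≠ 0 := hlog
    field_simp
  exact key.symm

theorem chain_of_equivalences (σ : ℝ) (hσ : 1/2 < σ) (l : ℕ) (hl : 0 < l)
    (cbar : ℝ) (hcbar : 0 < cbar) (g : ℝ → ℝ) (hg : ∀ᶠ T in atTop, T < g T)
    (hquotζ : ∃ C : ℝ, ∀ᶠ T in atTop,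
      |(∫ t in T..(g T), zsq (1/2) t) / (∫ t in T..(g T), zsq σ t) -
        (1 / (riemannZeta (2 * (σ:ℂ))).re) * Real.log T| ≤ C)
    (hquotS1 : ∃ C : ℝ, ∀ᶠ T in atTop,
      |(∫ t in T..(g T), zsq (1/2) t) / (∫ t in T..(g T), |S1 t| ^ (2 * l)) -
        (1 / cbar) * Real.log T| ≤ C)
    (tν : ℕ → ℝ) (hgram : IsGramSeq tν) (htitch : TitchAsymp tν) (hmoser : MoserAsymp tν)
    (x : ℝ) (hx : 0 < x) :
    Tendsto (fun τ : ℝ => chainA σ g tν x τ / chainB l cbar g tν x τ) atTop (nhds 1) ∧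
    Tendsto (fun τ : ℝ => chainB l cbar g tν x τ / chainC σ g tν x τ) atTop (nhds 1) ∧
    Tendsto (fun τ : ℝ => chainC σ g tν x τ / (x * τ)) atTop (nhds 1) := by
  have hzpos : 0 < (riemannZeta (2 * (σ:ℂ))).re := aux_zeta_re_pos hσ
  have hπ : (0:ℝ) < Real.pi := Real.pi_pos
  set z := (riemannZeta (2 * (σ:ℂ))).re with hzdef
  have h1A : Tendsto (fun T => ((∫ t in T..(g T), zsq (1/2) t) /
      (∫ t in T..(g T), zsq σ t)) / (1 / z * Real.log T)) atTop (𝓝 1) :=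
    aux_ratio_tendsto _ z hzpos hquotζ
  have h1B : Tendsto (fun T => ((∫ t in T..(g T), zsq (1/2) t) /
      (∫ t in T..(g T), |S1 t| ^ (2 * l))) / (1 / cbar * Real.log T)) atTop (𝓝 1) :=
    aux_ratio_tendsto _ cbar hcbar hquotS1
  have h2T : Tendsto (fun T => TitchSum tν T / (3 / (4 * Real.pi ^ 5) * T * Real.log T ^ 5))
      atTop (𝓝 1) := aux_asymp_tendsto _ _ htitch
  have h2M : Tendsto (fun T => MoserSum tν T / (1 / (4 * Real.pi ^ 3) * T * Real.log T ^ 5))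
      atTop (𝓝 1) := aux_asymp_tendsto _ _ hmoser
  have hz5 : (0:ℝ) < z ^ 5 := pow_pos hzpos 5
  have hc5 : (0:ℝ) < cbar ^ 5 := pow_pos hcbar 5
  have hK1 : 0 < 4 * Real.pi ^ 5 * x / (3 * z ^ 5) := by
    apply div_pos (by positivity) (by linarith)
  have hK2 : 0 < 4 * Real.pi ^ 5 * x / (3 * cbar ^ 5) := by
    apply div_pos (by positivity) (by linarith)
  have hK3 : 0 < 4 * Real.pi ^ 3 * x / z ^ 5 := by
    apply div_pos (by positivity) (by linarith)
  have hA : Tendsto (fun τ : ℝ => chainA σ g tν x τ / (x * τ)) atTop (𝓝 1) := by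
    have := aux_chain_limit (fun T => ∫ t in T..(g T), zsq (1/2) t)
      (fun T => ∫ t in T..(g T), zsq σ t) (TitchSum tν) z (3 / (4 * Real.pi ^ 5))
      (4 * Real.pi ^ 5 * x / (3 * z ^ 5)) x hK1 hx.ne' hzpos.ne' (by positivity)
      (by field_simp) h1A h2T
    exact this
  have hB : Tendsto (fun τ : ℝ => chainB l cbar g tν x τ / (x * τ)) atTop (𝓝 1) := by
    have := aux_chain_limit (fun T => ∫ t in T..(g T), zsq (1/2) t)
      (fun T => ∫ t in T..(g T), |S1 t| ^ (2 * l)) (TitchSum tν) cbar (3 / (4 * Real.pi ^ 5))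
      (4 * Real.pi ^ 5 * x / (3 * cbar ^ 5)) x hK2 hx.ne' hcbar.ne' (by positivity)
      (by field_simp) h1B h2T
    exact this
  have hC : Tendsto (fun τ : ℝ => chainC σ g tν x τ / (x * τ)) atTop (𝓝 1) := by
    have := aux_chain_limit (fun T => ∫ t in T..(g T), zsq (1/2) t)
      (fun T => ∫ t in T..(g T), zsq σ t) (MoserSum tν) z (1 / (4 * Real.pi ^ 3))
      (4 * Real.pi ^ 3 * x / z ^ 5) x hK3 hx.ne' hzpos.ne' (by positivity)
      (by field_simp) h1A h2M
    exact this
  have hquot : ∀ F G : ℝ → ℝ, Tendsto (fun τ : ℝ => F τ / (x * τ)) atTop (𝓝 1) →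
      Tendsto (fun τ : ℝ => G τ / (x * τ)) atTop (𝓝 1) →
      Tendsto (fun τ : ℝ => F τ / G τ) atTop (𝓝 1) := by
    intro F G hF hG
    have h := hF.div hG one_ne_zero
    simp only [ne_eq, one_ne_zero, not_false_eq_true, div_self] at h
    apply h.congr'
    filter_upwards [eventually_gt_atTop 0] with τ hτ
    simp only [Pi.div_apply]
    rw [div_div_div_cancel_right₀ (mul_pos hx hτ).ne']
  exact ⟨hquot _ _ hA hB, hquot _ _ hB hC, hC⟩
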